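/- Lemma 2.4(iii): Let x₁, x₂, y₁, y₂ ∈ H satisfy Q xᵢ − B xᵢ − Q yᵢ ∈ A yᵢ for i = 1, 2 (i.e. yᵢ = T xᵢ), and set rᵢ := xᵢ − yᵢ. Then 2ν · ⟪Q (y₁ − y₂), y₁ − y₂⟫ + (2ν − β) · ⟪Q (r₁ − r₂), r₁ − r₂⟫ ≤ 2ν · ⟪Q (x₁ − x₂), x₁ − x₂⟫; i.e. ‖T x₁ − T x₂‖_Q² + (1 − β/(2ν)) ‖(I−T)x₁ − (I−T)x₂‖_Q² ≤ ‖x₁ − x₂‖_Q². -/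

import Mathlib

open RealInnerProductSpace

lemma cs_aux {H : Type*} [NormedAddCommGroup H] [InnerProductSpace ℝ H]
    (Q : H →L[ℝ] H)
    (hQsym : ∀ x y : H, ⟪Q x, y⟫ = ⟪x, Q y⟫)
    (hQpos : ∀ x : H, 0 ≤ ⟪Q x, x⟫) (a c : H) :
    ⟪Q a, c⟫ ^ 2 ≤ ⟪Q a, a⟫ * ⟪Q c, c⟫ := by
  have key : ∀ t : ℝ, 0 ≤ ⟪Q a, a⟫ * (t * t) + (2 * ⟪Q a, c⟫) * t + ⟪Q c, c⟫ := by
    intro t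
    have h := hQpos (c + t • a)
    have hsym : ⟪Q c, a⟫ = ⟪Q a, c⟫ := by
      rw [hQsym c a, real_inner_comm]
    simp only [map_add, map_smul, inner_add_left, inner_add_right,
      real_inner_smul_left, real_inner_smul_right, ContinuousLinearMap.coe_smul',
      Pi.smul_apply, smul_eq_mul] at h
    rw [hsym] at h
    linarith [h]
  have hd := discrim_le_zero key
  unfold discrim at hd
  nlinarith [hd]

set_option maxHeartbeats 1600000 in
theorem stmt_4
    {H : Type*} [NormedAddCommGroup H] [InnerProductSpace ℝ H] [CompleteSpace H]
    (Q : H →L[ℝ] H)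
    (hQsym : ∀ x y : H, ⟪Q x, y⟫ = ⟪x, Q y⟫)
    (hQpos : ∀ x : H, 0 ≤ ⟪Q x, x⟫)
    (ν : ℝ) (hν : 0 < ν)
    (hνQ : ∀ w ∈ (LinearMap.ker (Q : H →ₗ[ℝ] H))ᗮ, ν * ‖w‖ ≤ ‖Q w‖)
    (β : ℝ) (hβ : 0 ≤ β)
    (B : H → H)
    (hB : ∀ x y : H, ‖B x - B y‖ ^ 2 ≤ β * ⟪B x - B y, x - y⟫)
    (hranB : Set.range B ⊆ Set.range Q)
    (A : H → Set H)
    (hA : ∀ x y u v : H, u ∈ A x → v ∈ A y → 0 ≤ ⟪u - v, x - y⟫)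
    (x₁ x₂ y₁ y₂ : H)
    (hy₁ : Q x₁ - B x₁ - Q y₁ ∈ A y₁)
    (hy₂ : Q x₂ - B x₂ - Q y₂ ∈ A y₂)
    (r₁ r₂ : H) (hr₁ : r₁ = x₁ - y₁) (hr₂ : r₂ = x₂ - y₂) :
    2 * ν * ⟪Q (y₁ - y₂), y₁ - y₂⟫ + (2 * ν - β) * ⟪Q (r₁ - r₂), r₁ - r₂⟫ ≤
      2 * ν * ⟪Q (x₁ - x₂), x₁ - x₂⟫ := by
  set b : H := B x₁ - B x₂ with hb
  set y : H := y₁ - y₂ with hy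
  set r : H := r₁ - r₂ with hrr
  have hx : x₁ - x₂ = y + r := by rw [hy, hrr, hr₁, hr₂]; abel
  have hsymry : ⟪Q y, r⟫ = ⟪Q r, y⟫ := by rw [hQsym y r, real_inner_comm]
  have hX : ⟪Q (x₁ - x₂), x₁ - x₂⟫ =
      ⟪Q y, y⟫ + ⟪Q r, r⟫ + 2 * ⟪Q r, y⟫ := by
    rw [hx, map_add, inner_add_left, inner_add_right, inner_add_right, hsymry]
    ring
  have hmono := hA y₁ y₂ _ _ hy₁ hy₂
  have hQr₁ : Q x₁ - B x₁ - Q y₁ = Q r₁ - B x₁ := by rw [hr₁, map_sub]; abel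
  have hQr₂ : Q x₂ - B x₂ - Q y₂ = Q r₂ - B x₂ := by rw [hr₂, map_sub]; abel
  rw [hQr₁, hQr₂] at hmono
  have hsub : Q r₁ - B x₁ - (Q r₂ - B x₂) = Q r - b := by
    rw [hrr, hb, map_sub]; abel
  rw [hsub, inner_sub_left] at hmono
  have hcoco := hB x₁ x₂
  obtain ⟨u₁, hu₁⟩ := hranB (Set.mem_range_self x₁)
  obtain ⟨u₂, hu₂⟩ := hranB (Set.mem_range_self x₂)
  have hQu : Q (u₁ - u₂) = b := by rw [map_sub, hu₁, hu₂]
  haveI : CompleteSpace (LinearMap.ker (Q : H →ₗ[ℝ] H)) :=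
    (ContinuousLinearMap.isClosed_ker Q).completeSpace_coe
  obtain ⟨k, hk, w, hw, hkw⟩ :=
    Submodule.exists_add_mem_mem_orthogonal (K := LinearMap.ker (Q : H →ₗ[ℝ] H)) (u₁ - u₂)
  have hQk : Q k = 0 := hk
  have hQw : Q w = b := by
    have h : Q (u₁ - u₂) = Q k + Q w := by rw [← map_add, ← hkw]
    rw [hQk, zero_add] at h
    rw [← h, hQu]
  have hνw : ν * ‖w‖ ≤ ‖b‖ := by rw [← hQw]; exact hνQ w hw
  have hW : ν * ⟪Q w, w⟫ ≤ ‖b‖ ^ 2 := by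
    have h1 : ⟪Q w, w⟫ ≤ ‖Q w‖ * ‖w‖ := real_inner_le_norm _ _
    have h2 : ‖Q w‖ = ‖b‖ := by rw [hQw]
    nlinarith [norm_nonneg (Q w), norm_nonneg w, hνw, hν.le]
  have hCS : ⟪b, r⟫ ^ 2 ≤ ⟪Q w, w⟫ * ⟪Q r, r⟫ := by
    rw [← hQw]; exact cs_aux Q hQsym hQpos w r
  have hby : ⟪b, y⟫ = ⟪b, x₁ - x₂⟫ - ⟪b, r⟫ := by
    rw [hx, inner_add_right]; ring
  have hR : (0:ℝ) ≤ ⟪Q r, r⟫ := hQpos r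
  have hWpos : (0:ℝ) ≤ ⟪Q w, w⟫ := hQpos w
  rw [hX]
  set bx : ℝ := ⟪b, x₁ - x₂⟫ with hbxd
  set br : ℝ := ⟪b, r⟫ with hbrd
  set P : ℝ := ⟪Q r, y⟫
  set R : ℝ := ⟪Q r, r⟫
  set W : ℝ := ⟪Q w, w⟫
  set t : ℝ := ‖b‖ with htd
  have ht : 0 ≤ t := norm_nonneg b
  rw [hby] at hmono
  have hcoco' : t ^ 2 ≤ β * bx := hcoco
  clear_value b y r bx br P R W t
  have hmono' : bx - br ≤ P := by linarith
  have key : 0 ≤ β * R + 4 * ν * (bx - br) := by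
    rcases eq_or_lt_of_le hβ with hβ0 | hβ0
    · -- β = 0 : b = 0
      have ht2 : t ^ 2 ≤ 0 := by rw [← hβ0] at hcoco'; linarith
      have ht0 : t = 0 := by
        have h0 : t ^ 2 = 0 := le_antisymm ht2 (by positivity)
        exact pow_eq_zero_iff (by norm_num) |>.mp h0
      have hb0 : b = 0 := norm_eq_zero.mp (htd ▸ ht0)
      have hbx : bx = 0 := by rw [hbxd, hb0]; simp
      have hbr : br = 0 := by rw [hbrd, hb0]; simp
      rw [hbx, hbr, ← hβ0]; norm_num
    · have hbx0 : 0 ≤ bx := by nlinarith [sq_nonneg t]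
      rcases le_or_gt br 0 with hbr | hbr
      · nlinarith [mul_nonneg hβ hR, mul_nonneg hν.le hbx0,
          mul_nonneg hν.le (neg_nonneg.mpr hbr)]
      · have hC : (4 * ν * β * br) ^ 2 ≤ (β ^ 2 * R + 4 * ν * t ^ 2) ^ 2 := by
          have h16a : (0:ℝ) ≤ 16 * ν ^ 2 * β ^ 2 := by positivity
          have e1 := mul_le_mul_of_nonneg_left hCS h16a
          have h16b : (0:ℝ) ≤ 16 * ν * β ^ 2 * R := by positivity
          have e2 := mul_le_mul_of_nonneg_left hW h16b
          nlinarith [sq_nonneg (β ^ 2 * R - 4 * ν * t ^ 2), e1, e2]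
        have hF : 4 * ν * β * br ≤ β ^ 2 * R + 4 * ν * t ^ 2 := by
          have ha : (0:ℝ) ≤ β ^ 2 * R + 4 * ν * t ^ 2 := by positivity
          nlinarith [hC, mul_pos (mul_pos (mul_pos (by norm_num : (0:ℝ) < 4) hν) hβ0) hbr]
        have hE : 0 ≤ β * (β * R + 4 * ν * (bx - br)) := by
          nlinarith [mul_le_mul_of_nonneg_left hcoco' (by positivity : (0:ℝ) ≤ 4 * ν)]
        exact nonneg_of_mul_nonneg_right hE hβ0
  have h4 : 4 * ν * (bx - br) ≤ 4 * ν * P :=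
    mul_le_mul_of_nonneg_left hmono' (by positivity)
  linarith [key, h4]
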